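/- Let K be a compact subset of ℂ with empty interior, let U be an open neighbourhood of K, and let φ : U → ℂ be holomorphic. Then the image φ(K) has empty interior in ℂ. -/

import Mathlib

open Set Metric TopologicalSpace Filter Topology

/-- If `K` is a compact subset of `ℂ` with empty interior and `φ` is holomorphic on an open
neighbourhood `U` of `K`, then `φ(K)` has empty interior. -/
theorem holomorphic_image_of_compact_empty_interior
    (K U : Set ℂ) (hK : IsCompact K) (hKint : interior K = ∅)
    (hU : IsOpen U) (hKU : K ⊆ U)
    (φ : ℂ → ℂ) (hφ : DifferentiableOn ℂ φ U) :
    interior (φ '' K) = ∅ := by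
  have hAn : AnalyticOnNhd ℂ φ U := hφ.analyticOnNhd hU
  have hAn' : AnalyticOnNhd ℂ (deriv φ) U := hAn.deriv
  set B : Set ℂ := {z ∈ K | deriv φ z = 0} with hBdef
  set A : Set ℂ := K \ B with hAdef
  -- Part 1: each point of B has a neighbourhood n with φ '' (B ∩ n) ⊆ {φ z}
  have hBn : ∀ z ∈ B, ∃ n : Set ℂ, n ∈ 𝓝 z ∧ φ '' (B ∩ n) ⊆ {φ z} := by
    intro z hz
    rcases (hAn' z (hKU hz.1)).eventually_eq_zero_or_eventually_ne_zero with h | h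
    · -- deriv φ ≡ 0 near z, so φ is constant near z
      obtain ⟨r, hr, hball⟩ := Metric.eventually_nhds_iff_ball.mp
        (h.and (hU.eventually_mem (hKU hz.1)))
      refine ⟨ball z r, ball_mem_nhds z hr, ?_⟩
      rintro _ ⟨y, ⟨_, hyb⟩, rfl⟩
      have hconst : φ y = φ z := by
        refine (convex_ball z r).is_const_of_fderivWithin_eq_zero
          (hφ.mono fun x hx => (hball x hx).2) (fun x hx => ?_) hyb (mem_ball_self hr)
        rw [fderivWithin_of_isOpen isOpen_ball hx, ← toSpanSingleton_deriv, (hball x hx).1]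
        ext; simp
      simp [hconst]
    · -- deriv φ ≠ 0 on a punctured neighbourhood of z
      obtain ⟨n, hn, hn'⟩ := (eventually_nhdsWithin_iff.mp h).exists_mem
      refine ⟨n, hn, ?_⟩
      rintro _ ⟨y, ⟨hyB, hyn⟩, rfl⟩
      have : y = z := by
        by_contra hne
        exact hn' y hyn hne hyB.2
      simp [this]
  -- Part 2: each point of A has a neighbourhood n and a closed set S with empty interior
  -- such that φ '' (K ∩ n) ⊆ S
  have hAn2 : ∀ z ∈ A, ∃ n : Set ℂ, n ∈ 𝓝 z ∧
      ∃ S : Set ℂ, IsClosed S ∧ interior S = ∅ ∧ φ '' (K ∩ n) ⊆ S := by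
    intro z hz
    have hzU : z ∈ U := hKU hz.1
    have hd : deriv φ z ≠ 0 := fun h0 => hz.2 ⟨hz.1, h0⟩
    have hstrict : HasStrictFDerivAt φ (fderiv ℂ φ z) z := (hAn z hzU).hasStrictFDerivAt
    set e' : ℂ ≃L[ℂ] ℂ := ContinuousLinearEquiv.unitsEquivAut ℂ (Units.mk0 _ hd) with he'def
    have he' : (e' : ℂ →L[ℂ] ℂ) = fderiv ℂ φ z := by
      ext
      simp [he'def, ContinuousLinearEquiv.unitsEquivAut_apply, fderiv_eq_smul_deriv,
        smul_eq_mul, mul_comm]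
    have hstrict' : HasStrictFDerivAt φ (e' : ℂ →L[ℂ] ℂ) z := he' ▸ hstrict
    set e := hstrict'.toOpenPartialHomeomorph φ with hedef
    have hcoe : ∀ x, e x = φ x := fun x =>
      congrFun (hstrict'.toOpenPartialHomeomorph_coe) x
    have hzsrc : z ∈ e.source := hstrict'.mem_toOpenPartialHomeomorph_source
    obtain ⟨r, hr, hrsub⟩ := nhds_basis_closedBall.mem_iff.mp (e.open_source.mem_nhds hzsrc)
    set S : Set ℂ := φ '' (K ∩ closedBall z r) with hSdef
    have hsub : K ∩ closedBall z r ⊆ e.source := fun x hx => hrsub hx.2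
    have hScomp : IsCompact S :=
      (hK.inter_right Metric.isClosed_closedBall).image_of_continuousOn
        (hφ.continuousOn.mono fun x hx => hKU hx.1)
    have hSint : interior S = ∅ := by
      by_contra hne
      obtain ⟨w, hw⟩ := nonempty_iff_ne_empty.mpr hne
      have hSsub : S ⊆ e.target := by
        rintro _ ⟨x, hx, rfl⟩
        exact (hcoe x) ▸ e.map_source (hsub hx)
      have hWopen : IsOpen (e.symm '' interior S) :=
        e.symm.isOpen_image_of_subset_source isOpen_interior
          (by rw [OpenPartialHomeomorph.symm_source]; exact interior_subset.trans hSsub)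
      have hWK : e.symm '' interior S ⊆ K := by
        rintro _ ⟨v, hv, rfl⟩
        obtain ⟨x, hx, rfl⟩ := interior_subset hv
        have : e.symm (φ x) = x := by
          rw [← hcoe x]; exact e.left_inv (hsub hx)
        rw [this]; exact hx.1
      have : e.symm '' interior S ⊆ interior K := hWopen.subset_interior_iff.mpr hWK
      rw [hKint] at this
      exact this ⟨w, hw, rfl⟩
    exact ⟨ball z r, ball_mem_nhds z hr, S, hScomp.isClosed, hSint,
      image_mono (inter_subset_inter_right _ ball_subset_closedBall)⟩
  choose! nB hnB hnB' using hBn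
  choose! nA hnA SA hSAc hSAi hSA' using hAn2
  obtain ⟨tB, htBsub, htBc, htBcov⟩ := TopologicalSpace.countable_cover_nhdsWithin
    (fun z hz => mem_nhdsWithin_of_mem_nhds (hnB z hz))
  obtain ⟨tA, htAsub, htAc, htAcov⟩ := TopologicalSpace.countable_cover_nhdsWithin
    (fun z hz => mem_nhdsWithin_of_mem_nhds (hnA z hz))
  have hmeagre : IsMeagre (φ '' K) := by
    rw [isMeagre_iff_countable_union_isNowhereDense]
    refine ⟨(fun z => SA z) '' tA ∪ (fun z => {φ z}) '' tB, ?_, ?_, ?_⟩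
    · rintro s (⟨z, hz, rfl⟩ | ⟨z, hz, rfl⟩)
      · exact ((hSAc z (htAsub hz)).isNowhereDense_iff).mpr (hSAi z (htAsub hz))
      · rw [IsNowhereDense, closure_singleton]
        exact interior_singleton _
    · exact (htAc.image _).union (htBc.image _)
    · rintro _ ⟨x, hxK, rfl⟩
      by_cases hx : x ∈ B
      · obtain ⟨z, hz, hmem⟩ := mem_iUnion₂.mp (htBcov hx)
        exact mem_sUnion.mpr ⟨{φ z}, Or.inr ⟨z, hz, rfl⟩,
          hnB' z (htBsub hz) ⟨x, ⟨hx, hmem⟩, rfl⟩⟩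
      · have hxA : x ∈ A := ⟨hxK, hx⟩
        obtain ⟨z, hz, hmem⟩ := mem_iUnion₂.mp (htAcov hxA)
        exact mem_sUnion.mpr ⟨SA z, Or.inl ⟨z, hz, rfl⟩,
          hSA' z (htAsub hz) ⟨x, ⟨hxK, hmem⟩, rfl⟩⟩
  rw [interior_eq_empty_iff_dense_compl]
  exact dense_of_mem_residual hmeagre
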